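/- Let u : ℝ → ℝ be five times continuously differentiable and set u_{i+ℓ} = u(x_i + ℓΔx), v_{i+ℓ} = u'(x_i + ℓΔx) for ℓ ∈ {−1, 1}. Then q'_0(x_i) := (3/(4Δx))(u_{i+1} − u_{i−1}) − (1/4)(v_{i−1} + v_{i+1}) satisfies |q'_0(x_i) − u'(x_i)| = O(Δx^4) as Δx → 0. -/

import Mathlib

open Filter Asymptotics Topology Set

lemma stepO {f f' : ℝ → ℝ} {n : ℕ} (hf : ∀ x, HasDerivAt f (f' x) x) (h0 : f 0 = 0)
    (hO : f' =O[𝓝 (0:ℝ)] fun h => h ^ n) : f =O[𝓝 (0:ℝ)] fun h => h ^ (n + 1) := by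
  obtain ⟨C, hC⟩ := hO.isBigOWith
  rw [isBigOWith_iff, Metric.eventually_nhds_iff] at hC
  obtain ⟨ε, hε, hball⟩ := hC
  rw [isBigO_iff]
  refine ⟨|C|, Metric.eventually_nhds_iff.2 ⟨ε, hε, fun h hh => ?_⟩⟩
  simp only [Real.dist_eq, sub_zero] at hh
  have key : ∀ t : ℝ, |t| ≤ |h| → ‖f' t‖ ≤ |C| * |h| ^ n := by
    intro t ht
    have hd : dist t 0 < ε := by
      simp only [Real.dist_eq, sub_zero]; exact lt_of_le_of_lt ht hh
    calc ‖f' t‖ ≤ C * ‖t ^ n‖ := hball hd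
      _ ≤ |C| * |h| ^ n := by
        rw [norm_pow, Real.norm_eq_abs]
        exact mul_le_mul (le_abs_self C) (pow_le_pow_left₀ (abs_nonneg t) ht n)
          (by positivity) (abs_nonneg C)
  have hnorm : ‖h ^ (n + 1)‖ = |h| ^ n * |h| := by
    rw [norm_pow, Real.norm_eq_abs, pow_succ]
  rcases le_or_gt 0 h with hpos | hneg
  · have := norm_image_sub_le_of_norm_deriv_le_segment' (a := 0) (b := h) (f := f) (f' := f')
      (fun x _ => (hf x).hasDerivWithinAt)
      (C := |C| * |h| ^ n)
      (fun x hx => key x (by rw [abs_of_nonneg hx.1, abs_of_nonneg hpos]; exact hx.2.le))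
      h (right_mem_Icc.2 hpos)
    rw [h0, sub_zero] at this
    calc ‖f h‖ ≤ |C| * |h| ^ n * (h - 0) := this
      _ ≤ |C| * ‖h ^ (n + 1)‖ := by
        rw [hnorm, sub_zero, ← mul_assoc]
        exact mul_le_mul_of_nonneg_left (le_abs_self h)
          (mul_nonneg (abs_nonneg C) (pow_nonneg (abs_nonneg h) n))
  · have := norm_image_sub_le_of_norm_deriv_le_segment' (a := h) (b := 0) (f := f) (f' := f')
      (fun x _ => (hf x).hasDerivWithinAt)
      (C := |C| * |h| ^ n)
      (fun x hx => key x (by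
        rw [abs_le]; constructor
        · exact le_trans (neg_abs_le h) hx.1
        · exact le_trans hx.2.le (abs_nonneg h)))
      0 (right_mem_Icc.2 hneg.le)
    rw [h0] at this
    have h2 : ‖f h‖ ≤ |C| * |h| ^ n * (0 - h) := by
      rw [show (0:ℝ) - f h = -(f h) by ring, norm_neg] at this; exact this
    calc ‖f h‖ ≤ |C| * |h| ^ n * (0 - h) := h2
      _ ≤ |C| * ‖h ^ (n + 1)‖ := by
        rw [hnorm, ← mul_assoc]
        have h1 : 0 - h ≤ |h| := by rw [abs_of_neg hneg]; linarith
        exact mul_le_mul_of_nonneg_left h1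
          (mul_nonneg (abs_nonneg C) (pow_nonneg (abs_nonneg h) n))

theorem stmt_6 (u : ℝ → ℝ) (hu : ContDiff ℝ 5 u) (xi : ℝ) :
    (fun Δx : ℝ =>
        (3 / (4 * Δx)) * (u (xi + Δx) - u (xi - Δx))
            - (1 / 4) * (deriv u (xi - Δx) + deriv u (xi + Δx))
          - deriv u xi)
      =O[𝓝[>] (0 : ℝ)] fun Δx => Δx ^ 4 := by
  set D : ℕ → ℝ → ℝ := fun k => iteratedDeriv k u with hD
  have hd : ∀ k : ℕ, k < 5 → ∀ x : ℝ, HasDerivAt (D k) (D (k + 1) x) x := by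
    intro k hk x
    have hdiff := (hu.differentiable_iteratedDeriv k (by exact_mod_cast hk)).differentiableAt
      (x := x)
    simpa [hD, iteratedDeriv_succ] using hdiff.hasDerivAt
  have hp : ∀ k : ℕ, k < 5 → ∀ h : ℝ,
      HasDerivAt (fun t => D k (xi + t)) (D (k + 1) (xi + h)) h := by
    intro k hk h
    simpa [Function.comp_def] using (hd k hk (xi + h)).comp h ((hasDerivAt_id h).const_add xi)
  have hm : ∀ k : ℕ, k < 5 → ∀ h : ℝ,
      HasDerivAt (fun t => D k (xi - t)) (-(D (k + 1) (xi - h))) h := by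
    intro k hk h
    simpa [Function.comp_def] using (hd k hk (xi - h)).comp h ((hasDerivAt_id h).const_sub xi)
  set f3 : ℝ → ℝ := fun h => -(h * (D 4 (xi + h) - D 4 (xi - h))) with hf3
  set f2 : ℝ → ℝ := fun h => D 2 (xi + h) - D 2 (xi - h) - h * (D 3 (xi + h) + D 3 (xi - h))
    with hf2
  set f1 : ℝ → ℝ := fun h =>
    2 * (D 1 (xi + h) + D 1 (xi - h)) - h * (D 2 (xi + h) - D 2 (xi - h)) - 4 * D 1 xi with hf1
  set f0 : ℝ → ℝ := fun h =>
    3 * (D 0 (xi + h) - D 0 (xi - h)) - h * (D 1 (xi - h) + D 1 (xi + h)) - 4 * h * D 1 xi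
    with hf0
  -- f3 = O(h^2)
  have hO3 : f3 =O[𝓝 (0:ℝ)] fun h => h ^ 2 := by
    have h4p : (fun h : ℝ => D 4 (xi + h) - D 4 xi) =O[𝓝 (0:ℝ)] fun h => h := by
      have := (hd 4 (by norm_num) xi).hasFDerivAt.isBigO_sub
      have hcomp := this.comp_tendsto (by
        simpa using (Continuous.tendsto (by continuity : Continuous fun h : ℝ => xi + h) 0) :
        Tendsto (fun h : ℝ => xi + h) (𝓝 0) (𝓝 xi))
      simp only [Function.comp_def] at hcomp
      simpa using hcomp
    have h4m : (fun h : ℝ => D 4 (xi - h) - D 4 xi) =O[𝓝 (0:ℝ)] fun h => h := by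
      have := (hd 4 (by norm_num) xi).hasFDerivAt.isBigO_sub
      have hcomp := this.comp_tendsto (by
        simpa using (Continuous.tendsto (by continuity : Continuous fun h : ℝ => xi - h) 0) :
        Tendsto (fun h : ℝ => xi - h) (𝓝 0) (𝓝 xi))
      simp only [Function.comp_def] at hcomp
      refine hcomp.trans (isBigO_of_le _ fun h => ?_)
      rw [show xi - h - xi = -h by ring]
      simp
    have hsub : (fun h : ℝ => D 4 (xi + h) - D 4 (xi - h)) =O[𝓝 (0:ℝ)] fun h => h := by
      have := h4p.sub h4m
      simpa using this
    have hmul := (isBigO_refl (fun h : ℝ => h) (𝓝 (0:ℝ))).mul hsub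
    refine hmul.neg_left.congr (fun h => rfl) fun h => by ring
  -- derivatives
  have Hf2 : ∀ h : ℝ, HasDerivAt f2 (f3 h) h := by
    intro h
    have A := (hp 2 (by norm_num) h).sub (hm 2 (by norm_num) h)
    have B := (hasDerivAt_id h).mul ((hp 3 (by norm_num) h).add (hm 3 (by norm_num) h))
    have := A.sub B
    refine this.congr_deriv ?_
    simp only [hf3, id_eq, Pi.add_apply]; push_cast; ring
  have Hf1 : ∀ h : ℝ, HasDerivAt f1 (f2 h) h := by
    intro h
    have A := ((hp 1 (by norm_num) h).add (hm 1 (by norm_num) h)).const_mul 2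
    have B := (hasDerivAt_id h).mul ((hp 2 (by norm_num) h).sub (hm 2 (by norm_num) h))
    have C := hasDerivAt_const h (4 * D 1 xi)
    have := (A.sub B).sub C
    refine this.congr_deriv ?_
    simp only [hf2, id_eq, Pi.add_apply, Pi.sub_apply]; push_cast; ring
  have Hf0 : ∀ h : ℝ, HasDerivAt f0 (f1 h) h := by
    intro h
    have A := ((hp 0 (by norm_num) h).sub (hm 0 (by norm_num) h)).const_mul 3
    have B := (hasDerivAt_id h).mul ((hm 1 (by norm_num) h).add (hp 1 (by norm_num) h))
    have C := ((hasDerivAt_id h).const_mul 4).mul_const (D 1 xi)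
    have := (A.sub B).sub C
    refine this.congr_deriv ?_
    simp only [hf1, id_eq, Pi.add_apply]; push_cast; ring
  have hO2 : f2 =O[𝓝 (0:ℝ)] fun h => h ^ 3 := stepO Hf2 (by simp [hf2]) hO3
  have hO1 : f1 =O[𝓝 (0:ℝ)] fun h => h ^ 4 := stepO Hf1 (by simp only [hf1, id_eq]; push_cast; ring) hO2
  have hO0 : f0 =O[𝓝 (0:ℝ)] fun h => h ^ 5 := stepO Hf0 (by simp [hf0]) hO1
  -- conclude
  have hO0' : f0 =O[𝓝[>] (0:ℝ)] fun h => h ^ 5 := hO0.mono nhdsWithin_le_nhds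
  have hinv : (fun h : ℝ => (4 * h)⁻¹) =O[𝓝[>] (0:ℝ)] fun h : ℝ => (4 * h)⁻¹ :=
    isBigO_refl _ _
  have hprod := hO0'.mul hinv
  have hev : ∀ᶠ h : ℝ in 𝓝[>] (0:ℝ), h ∈ Ioi (0:ℝ) := self_mem_nhdsWithin
  have hD0 : D 0 = u := by simp [hD]
  have hD1 : D 1 = deriv u := by simp [hD, iteratedDeriv_one]
  have h2 : (fun Δx : ℝ =>
        (3 / (4 * Δx)) * (u (xi + Δx) - u (xi - Δx))
            - (1 / 4) * (deriv u (xi - Δx) + deriv u (xi + Δx))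
          - deriv u xi) =O[𝓝[>] (0:ℝ)] fun h => h ^ 5 * (4 * h)⁻¹ := by
    refine hprod.congr' ?_ (EventuallyEq.refl _ _)
    filter_upwards [hev] with h hh
    have hne : h ≠ 0 := ne_of_gt hh
    simp only [hf0, hD0, hD1]
    field_simp
  refine h2.trans (IsBigO.of_bound (1/4) ?_)
  filter_upwards [hev] with h hh
  have hne : h ≠ 0 := ne_of_gt hh
  have : h ^ 5 * (4 * h)⁻¹ = h ^ 4 / 4 := by field_simp
  rw [this]
  rw [Real.norm_eq_abs, Real.norm_eq_abs, abs_div, abs_of_nonneg (by norm_num : (0:ℝ) ≤ 4)]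
  rw [div_le_iff₀ (by norm_num : (0:ℝ) < 4)]
  rw [one_div]
  nlinarith [abs_nonneg (h^4)]
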